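/- Let K ⊆ ℝⁿ be a nonempty compact convex set with facet description K = ⋂_{i=1}^m {z ∈ ℝⁿ : ⟨hᵢ, z⟩ ≤ bᵢ}, where h₁,…,h_m ∈ ℝⁿ are nonzero and b₁,…,b_m ∈ ℝ, with 0 ∈ K, and let y ∈ ℝⁿ be nonzero with y ∈ pos(K). Define K∖y = ⋂_{i∉J(y)} {z : ⟨hᵢ, z⟩ ≤ bᵢ} and assume ξ(y; K∖y) < 1. Then: (1) every extreme point of K other than y/ξ(y) is an extreme point of conv(K ∪ {y}); and (2) if moreover y is not a positive scalar multiple of any extreme point of K and ξ(y) > 1, then the set of extreme points of conv(K ∪ {y}) equals the union of the set of extreme points of K with {y}. -/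

import Mathlib

open Finset RealInnerProductSpace Pointwise

noncomputable section

/-- The active index set `J(y)` of the facet description `⟨hᵢ, ·⟩ ≤ bᵢ` of `K` at `y`. -/
def activeJ {n m : ℕ} (h : Fin m → EuclideanSpace ℝ (Fin n)) (b : Fin m → ℝ)
    (K : Set (EuclideanSpace ℝ (Fin n))) (y : EuclideanSpace ℝ (Fin n)) : Set (Fin m) :=
  {i | ⟪h i, y⟫ = b i * gauge K y}

/-- `K∖y`: the polyhedral set obtained by dropping the constraints active at `y`. -/
def dropK {n m : ℕ} (h : Fin m → EuclideanSpace ℝ (Fin n)) (b : Fin m → ℝ)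
    (K : Set (EuclideanSpace ℝ (Fin n))) (y : EuclideanSpace ℝ (Fin n)) :
    Set (EuclideanSpace ℝ (Fin n)) :=
  {z | ∀ i, i ∉ activeJ h b K y → ⟪h i, z⟫ ≤ b i}

/-- At an extreme point of a polyhedron, any vector orthogonal to all active constraint
normals is zero. -/
private lemma extreme_span' {n m : ℕ} {h : Fin m → EuclideanSpace ℝ (Fin n)} {b : Fin m → ℝ}
    {K : Set (EuclideanSpace ℝ (Fin n))}
    (hfacet : K = ⋂ i, {z : EuclideanSpace ℝ (Fin n) | ⟪h i, z⟫ ≤ b i})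
    {z : EuclideanSpace ℝ (Fin n)} (hz : z ∈ Set.extremePoints ℝ K)
    (d : EuclideanSpace ℝ (Fin n)) (hd : ∀ i, ⟪h i, z⟫ = b i → ⟪h i, d⟫ = 0) : d = 0 := by
  classical
  have hzK : z ∈ K := hz.1
  have hzle : ∀ i, ⟪h i, z⟫ ≤ b i := by
    intro i
    have h' := hzK
    rw [hfacet, Set.mem_iInter] at h'
    exact h' i
  set S : Finset (Fin m) := Finset.univ.filter (fun i => ⟪h i, z⟫ ≠ b i) with hSdef
  set f : Fin m → ℝ := fun i => (b i - ⟪h i, z⟫) / (|⟪h i, d⟫| + 1) with hf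
  have hfpos : ∀ i ∈ S, 0 < f i := by
    intro i hi
    have hne : ⟪h i, z⟫ ≠ b i := by simpa [hSdef] using hi
    have h1 : ⟪h i, z⟫ < b i := lt_of_le_of_ne (hzle i) hne
    have h2 : 0 < b i - ⟪h i, z⟫ := by linarith
    have h3 : 0 < |⟪h i, d⟫| + 1 := by positivity
    exact div_pos h2 h3
  obtain ⟨ε, hε0, hεf⟩ : ∃ ε : ℝ, 0 < ε ∧ ∀ i ∈ S, ε ≤ f i := by
    by_cases hS : S.Nonempty
    · refine ⟨min 1 (S.inf' hS f), lt_min one_pos ?_, fun i hi => (min_le_right _ _).trans (Finset.inf'_le f hi)⟩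
      rw [Finset.lt_inf'_iff]
      exact hfpos
    · exact ⟨1, one_pos, fun i hi => absurd ⟨i, hi⟩ hS⟩
  have hkey : ∀ i, ε * |⟪h i, d⟫| ≤ b i - ⟪h i, z⟫ ∨ ⟪h i, z⟫ = b i := by
    intro i
    by_cases hi : ⟪h i, z⟫ = b i
    · exact Or.inr hi
    · left
      have hiS : i ∈ S := by rw [hSdef, Finset.mem_filter]; exact ⟨Finset.mem_univ i, hi⟩
      have h1 : ε ≤ f i := hεf i hiS
      have h2 : 0 < b i - ⟪h i, z⟫ := by
        have := lt_of_le_of_ne (hzle i) hi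
        linarith
      have h3 : 0 < |⟪h i, d⟫| + 1 := by positivity
      have h4 : ε * |⟪h i, d⟫| ≤ f i * |⟪h i, d⟫| :=
        mul_le_mul_of_nonneg_right h1 (abs_nonneg _)
      have h5 : f i * |⟪h i, d⟫| ≤ b i - ⟪h i, z⟫ := by
        rw [hf]
        rw [div_mul_eq_mul_div, div_le_iff₀ h3]
        nlinarith [abs_nonneg (⟪h i, d⟫)]
      linarith
  have hmem : ∀ σ : ℝ, |σ| ≤ ε → z + σ • d ∈ K := by
    intro σ hσ
    rw [hfacet, Set.mem_iInter]
    intro i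
    simp only [Set.mem_setOf_eq, inner_add_right, real_inner_smul_right]
    rcases hkey i with hk | hk
    · have h6 : σ * ⟪h i, d⟫ ≤ |σ| * |⟪h i, d⟫| := by
        calc σ * ⟪h i, d⟫ ≤ |σ * ⟪h i, d⟫| := le_abs_self _
        _ = |σ| * |⟪h i, d⟫| := abs_mul _ _
      have h7 : |σ| * |⟪h i, d⟫| ≤ ε * |⟪h i, d⟫| :=
        mul_le_mul_of_nonneg_right hσ (abs_nonneg _)
      linarith
    · rw [hd i hk, hk]
      simp
  have hp : z + ε • d ∈ K := hmem ε (by rw [abs_of_pos hε0])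
  have hm : z + (-ε) • d ∈ K := hmem (-ε) (by rw [abs_neg, abs_of_pos hε0])
  have hseg : z ∈ openSegment ℝ (z + (-ε) • d) (z + ε • d) := by
    refine ⟨1/2, 1/2, by norm_num, by norm_num, by norm_num, ?_⟩
    module
  have h8 := hz.2 hp hm (by rw [openSegment_symm]; exact hseg)
  have h9 : ε • d = 0 := by
    have := h8
    nth_rewrite 2 [← add_zero z] at this
    exact add_left_cancel this
  exact (smul_eq_zero.mp h9).resolve_left (ne_of_gt hε0)

set_option maxHeartbeats 1600000 in
theorem stmt17 {n m : ℕ}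
    (K : Set (EuclideanSpace ℝ (Fin n)))
    (hKne : K.Nonempty) (hKcomp : IsCompact K) (hKconv : Convex ℝ K)
    (h : Fin m → EuclideanSpace ℝ (Fin n)) (b : Fin m → ℝ)
    (hh : ∀ i, h i ≠ 0)
    (hfacet : K = ⋂ i, {z : EuclideanSpace ℝ (Fin n) | ⟪h i, z⟫ ≤ b i})
    (h0K : (0 : EuclideanSpace ℝ (Fin n)) ∈ K)
    (y : EuclideanSpace ℝ (Fin n)) (hy : y ≠ 0)
    (hypos : ∃ lam : ℝ, 0 < lam ∧ y ∈ lam • K)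
    (hdrop : gauge (dropK h b K y) y < 1) :
    (∀ z ∈ Set.extremePoints ℝ K, z ≠ (gauge K y)⁻¹ • y →
        z ∈ Set.extremePoints ℝ (convexHull ℝ (K ∪ {y}))) ∧
      ((¬ ∃ c : ℝ, 0 < c ∧ ∃ z ∈ Set.extremePoints ℝ K, y = c • z) →
        1 < gauge K y →
        Set.extremePoints ℝ (convexHull ℝ (K ∪ {y})) =
          Set.extremePoints ℝ K ∪ {y}) := by
  classical
  obtain ⟨lam, hlam0, hlamK⟩ := hypos
  -- membership criterion
  have hmemK : ∀ z, z ∈ K ↔ ∀ i, ⟪h i, z⟫ ≤ b i := by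
    intro z
    rw [hfacet]
    simp [Set.mem_iInter]
  -- b is nonnegative
  have hb : ∀ i, 0 ≤ b i := by
    intro i
    have := (hmemK 0).mp h0K i
    simpa using this
  -- gauge is positive
  have hSK : lam ∈ {r : ℝ | 0 < r ∧ y ∈ r • K} := ⟨hlam0, hlamK⟩
  obtain ⟨R, hRsub⟩ := hKcomp.isBounded.subset_closedBall 0
  have hR' : ∀ x ∈ K, ‖x‖ ≤ max R 1 := by
    intro x hx
    have := hRsub hx
    rw [Metric.mem_closedBall, dist_zero_right] at this
    exact this.trans (le_max_left _ _)
  have hR'0 : (0:ℝ) < max R 1 := lt_of_lt_of_le one_pos (le_max_right _ _)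
  have hSlb : ∀ r ∈ {r : ℝ | 0 < r ∧ y ∈ r • K}, ‖y‖ / max R 1 ≤ r := by
    rintro r ⟨hr0, hyr⟩
    obtain ⟨x, hxK, hxy⟩ := hyr
    have h1 : ‖y‖ = r * ‖x‖ := by
      rw [← hxy, norm_smul, Real.norm_eq_abs, abs_of_pos hr0]
    have h2 : ‖x‖ ≤ max R 1 := hR' x hxK
    rw [div_le_iff₀ hR'0]
    nlinarith [norm_nonneg x]
  have hgauge_eq : gauge K y = sInf {r : ℝ | 0 < r ∧ y ∈ r • K} := rfl
  have hξlb : ‖y‖ / max R 1 ≤ gauge K y := by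
    rw [hgauge_eq]
    exact le_csInf ⟨lam, hSK⟩ hSlb
  have hξ0 : 0 < gauge K y :=
    lt_of_lt_of_le (div_pos (norm_pos_iff.mpr hy) hR'0) hξlb
  set ξ := gauge K y with hξdef
  -- gauge is attained : y' ∈ K
  have hbdd : BddBelow {r : ℝ | 0 < r ∧ y ∈ r • K} :=
    ⟨0, fun r hr => hr.1.le⟩
  have hy'K : ξ⁻¹ • y ∈ K := by
    rw [← hKcomp.isClosed.closure_eq, Metric.mem_closure_iff]
    intro δ hδ
    have hpos : (0:ℝ) < ξ^2 * δ / (‖y‖ + 1) := by positivity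
    have hlt : sInf {r : ℝ | 0 < r ∧ y ∈ r • K} < ξ + ξ^2 * δ / (‖y‖ + 1) := by
      rw [← hgauge_eq]; linarith
    obtain ⟨r, hrS, hrlt⟩ := exists_lt_of_csInf_lt ⟨lam, hSK⟩ hlt
    obtain ⟨hr0, hyr⟩ := hrS
    have hrξ : ξ ≤ r := by
      rw [hgauge_eq]
      exact csInf_le hbdd ⟨hr0, hyr⟩
    have hxK : r⁻¹ • y ∈ K := by
      rwa [← Set.mem_smul_set_iff_inv_smul_mem₀ (ne_of_gt hr0)]
    refine ⟨r⁻¹ • y, hxK, ?_⟩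
    rw [dist_eq_norm]
    have he : ξ⁻¹ • y - r⁻¹ • y = (ξ⁻¹ - r⁻¹) • y := (sub_smul _ _ y).symm
    rw [he, norm_smul, Real.norm_eq_abs,
      abs_of_nonneg (by rw [sub_nonneg]; exact inv_anti₀ hξ0 hrξ)]
    have h1 : ξ⁻¹ - r⁻¹ = (r - ξ)/(ξ*r) := by
      field_simp
    rw [h1, div_mul_eq_mul_div, div_lt_iff₀ (by positivity)]
    have h2 : (r - ξ) * (‖y‖ + 1) < ξ^2 * δ := by
      have h3 : r - ξ < ξ^2 * δ / (‖y‖ + 1) := by linarith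
      have h4 : (0:ℝ) < ‖y‖ + 1 := by positivity
      calc (r - ξ) * (‖y‖ + 1) < (ξ^2 * δ / (‖y‖ + 1)) * (‖y‖ + 1) := by
            exact mul_lt_mul_of_pos_right h3 h4
      _ = ξ^2 * δ := by field_simp
    nlinarith [sub_nonneg.mpr hrξ, mul_nonneg (mul_nonneg hδ.le hξ0.le) (sub_nonneg.mpr hrξ)]
  -- strict inequality for inactive constraints
  have hstar : ∀ i, i ∉ activeJ h b K y → ⟪h i, y⟫ < b i := by
    have hKsub : K ⊆ dropK h b K y := by
      intro z hz i _
      exact (hmemK z).mp hz i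
    have hlamD : y ∈ lam • dropK h b K y := Set.smul_set_mono hKsub hlamK
    have hgaugeD : gauge (dropK h b K y) y
        = sInf {r : ℝ | 0 < r ∧ y ∈ r • dropK h b K y} := rfl
    have hltD : sInf {r : ℝ | 0 < r ∧ y ∈ r • dropK h b K y} < 1 := by
      rw [← hgaugeD]; exact hdrop
    obtain ⟨r, hrS, hr1⟩ := exists_lt_of_csInf_lt
      (⟨lam, hlam0, hlamD⟩ : {r : ℝ | 0 < r ∧ y ∈ r • dropK h b K y}.Nonempty) hltD
    obtain ⟨hr0, hyr⟩ := hrS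
    have hyD : r⁻¹ • y ∈ dropK h b K y := by
      rwa [← Set.mem_smul_set_iff_inv_smul_mem₀ (ne_of_gt hr0)]
    intro i hiJ
    have hi1 : ⟪h i, r⁻¹ • y⟫ ≤ b i := hyD i hiJ
    rw [real_inner_smul_right] at hi1
    have hi2 : ⟪h i, y⟫ ≤ r * b i := by
      rw [← inv_mul_le_iff₀ hr0] ; exact hi1
    rcases lt_or_eq_of_le (hb i) with hbi | hbi
    · nlinarith
    · have hle : ⟪h i, y⟫ ≤ 0 := by nlinarith
      rcases lt_or_eq_of_le hle with h' | h'
      · rw [← hbi]; exact h'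
      · exact absurd (show ⟪h i, y⟫ = b i * ξ by rw [h', ← hbi, zero_mul]) hiJ
  -- y' saturates the active constraints
  have hJy' : ∀ i ∈ activeJ h b K y, ⟪h i, ξ⁻¹ • y⟫ = b i := by
    intro i hi
    have hi' : ⟪h i, y⟫ = b i * ξ := hi
    rw [real_inner_smul_right, hi']
    field_simp
  -- the key lemma
  have hL : ∀ z ∈ Set.extremePoints ℝ K, ∀ k ∈ K, ∀ t : ℝ, 0 < t → t ≤ 1 →
      z = (1 - t) • k + t • y → z = ξ⁻¹ • y := by
    intro z hz k hk t ht0 ht1 hzeq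
    have hkle : ∀ i, ⟪h i, k⟫ ≤ b i := (hmemK k).mp hk
    have hd : ∀ i, ⟪h i, z⟫ = b i → ⟪h i, z - ξ⁻¹ • y⟫ = 0 := by
      intro i hi
      have hiJ : i ∈ activeJ h b K y := by
        by_contra hiJ
        have hs := hstar i hiJ
        have hlt : ⟪h i, z⟫ < b i := by
          rw [hzeq, inner_add_right, real_inner_smul_right, real_inner_smul_right]
          nlinarith [hkle i]
        exact absurd hi (ne_of_lt hlt)
      rw [inner_sub_right, hi, hJy' i hiJ, sub_self]
    exact sub_eq_zero.mp (extreme_span' hfacet hz _ hd)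
  -- representation of the convex hull
  have hQ : convexHull ℝ (K ∪ {y}) = convexJoin ℝ {y} K := by
    rw [Set.union_singleton, convexHull_insert hKne, hKconv.convexHull_eq]
  have hQrep : ∀ x ∈ convexHull ℝ (K ∪ {y}),
      ∃ a : ℝ, ∃ k ∈ K, 0 ≤ a ∧ a ≤ 1 ∧ x = a • y + (1 - a) • k := by
    intro x hx
    rw [hQ, mem_convexJoin] at hx
    obtain ⟨y₀, hy₀, k, hkK, p, q, hp, hq, hpq, hx⟩ := hx
    rw [Set.mem_singleton_iff] at hy₀
    subst hy₀
    exact ⟨p, k, hkK, hp, by linarith,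
      by rw [← hx, show (1:ℝ) - p = q by linarith]⟩
  have hKQ : K ⊆ convexHull ℝ (K ∪ {y}) :=
    fun x hx => subset_convexHull ℝ _ (Or.inl hx)
  have hyQ : y ∈ convexHull ℝ (K ∪ {y}) :=
    subset_convexHull ℝ _ (Or.inr rfl)
  -- part (1)
  have part1 : ∀ z ∈ Set.extremePoints ℝ K, z ≠ ξ⁻¹ • y →
      z ∈ Set.extremePoints ℝ (convexHull ℝ (K ∪ {y})) := by
    intro z hz hzy'
    refine ⟨hKQ hz.1, ?_⟩
    intro x₁ hx₁ x₂ hx₂ hseg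
    obtain ⟨a₁, k₁, hk₁, ha₁0, ha₁1, hx₁e⟩ := hQrep x₁ hx₁
    obtain ⟨a₂, k₂, hk₂, ha₂0, ha₂1, hx₂e⟩ := hQrep x₂ hx₂
    obtain ⟨u, v, hu, hv, huv, hzc⟩ := hseg
    have hw : u • x₁ + v • x₂
        = (u * a₁ + v * a₂) • y + ((u * (1 - a₁)) • k₁ + (v * (1 - a₂)) • k₂) := by
      rw [hx₁e, hx₂e, smul_add, smul_add, smul_smul, smul_smul, smul_smul, smul_smul,
        add_smul]
      abel
    set t := u * a₁ + v * a₂ with htdef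
    have ht0 : 0 ≤ t := by positivity
    have ht1 : t ≤ 1 := by nlinarith
    rcases eq_or_lt_of_le ht0 with ht0' | ht0'
    · -- t = 0 : both endpoints are in K
      have h1 : 0 ≤ u * a₁ := by positivity
      have h2 : 0 ≤ v * a₂ := by positivity
      have h3 : u * a₁ = 0 := by rw [htdef] at ht0'; linarith
      have h4 : v * a₂ = 0 := by rw [htdef] at ht0'; linarith
      have ha₁ : a₁ = 0 := by
        rcases mul_eq_zero.mp h3 with h' | h'
        · exact absurd h' (ne_of_gt hu)
        · exact h'
      have ha₂ : a₂ = 0 := by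
        rcases mul_eq_zero.mp h4 with h' | h'
        · exact absurd h' (ne_of_gt hv)
        · exact h'
      have hx₁K : x₁ ∈ K := by
        rw [hx₁e, ha₁]
        simpa using hk₁
      have hx₂K : x₂ ∈ K := by
        rw [hx₂e, ha₂]
        simpa using hk₂
      exact hz.2 hx₁K hx₂K ⟨u, v, hu, hv, huv, hzc⟩
    · exfalso
      apply hzy'
      rcases eq_or_lt_of_le ht1 with ht1' | ht1'
      · -- t = 1 : z = y
        have h1 : 0 ≤ u * (1 - a₁) := by nlinarith
        have h2 : 0 ≤ v * (1 - a₂) := by nlinarith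
        have h3 : u * (1 - a₁) + v * (1 - a₂) = 0 := by
          rw [htdef] at ht1'; nlinarith
        have ha₁ : a₁ = 1 := by
          have h4 : u * (1 - a₁) = 0 := by linarith
          rcases mul_eq_zero.mp h4 with h' | h'
          · exact absurd h' (ne_of_gt hu)
          · linarith
        have ha₂ : a₂ = 1 := by
          have h4 : v * (1 - a₂) = 0 := by linarith
          rcases mul_eq_zero.mp h4 with h' | h'
          · exact absurd h' (ne_of_gt hv)
          · linarith
        have hzy : z = y := by
          rw [← hzc, hx₁e, hx₂e, ha₁, ha₂]
          simp only [sub_self, zero_smul, add_zero, one_smul]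
          rw [← add_smul, huv, one_smul]
        exact hL z hz 0 h0K 1 one_pos le_rfl (by rw [hzy]; simp)
      · -- 0 < t < 1
        have h1t : (0:ℝ) < 1 - t := by linarith
        have hzw : z = t • y + ((u * (1 - a₁)) • k₁ + (v * (1 - a₂)) • k₂) :=
          hzc.symm.trans hw
        have hkK : (1 - t)⁻¹ • ((u * (1 - a₁)) • k₁ + (v * (1 - a₂)) • k₂) ∈ K := by
          have hc1 : 0 ≤ (1 - t)⁻¹ * (u * (1 - a₁)) :=
            mul_nonneg (inv_nonneg.mpr h1t.le) (mul_nonneg hu.le (by linarith))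
          have hc2 : 0 ≤ (1 - t)⁻¹ * (v * (1 - a₂)) :=
            mul_nonneg (inv_nonneg.mpr h1t.le) (mul_nonneg hv.le (by linarith))
          have hcs : (1 - t)⁻¹ * (u * (1 - a₁)) + (1 - t)⁻¹ * (v * (1 - a₂)) = 1 := by
            rw [← mul_add,
              show u * (1 - a₁) + v * (1 - a₂) = 1 - t by rw [htdef]; linear_combination huv,
              inv_mul_cancel₀ (ne_of_gt h1t)]
          have := hKconv hk₁ hk₂ hc1 hc2 hcs
          convert this using 1
          rw [smul_add, smul_smul, smul_smul]
        refine hL z hz _ hkK t ht0' ht1'.le ?_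
        rw [smul_inv_smul₀ (ne_of_gt h1t), hzw]
        abel
  refine ⟨part1, ?_⟩
  -- part (2)
  intro hH hξ1
  have hyK : y ∉ K := fun hyK' => absurd (gauge_le_one_of_mem hyK') (not_le.mpr hξ1)
  apply Set.Subset.antisymm
  · -- extreme points of Q are in ext K ∪ {y}
    intro w hw
    by_cases hwy : w = y
    · exact Or.inr hwy
    · left
      obtain ⟨a, k, hkK, ha0, ha1, hwe⟩ := hQrep w hw.1
      rcases eq_or_lt_of_le ha1 with ha1' | ha1'
      · exfalso
        apply hwy
        rw [hwe, ha1']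
        simp
      rcases eq_or_lt_of_le ha0 with ha0' | ha0'
      · have hwK : w ∈ K := by
          rw [hwe, ← ha0']
          simpa using hkK
        exact ⟨hwK, fun x₁ h₁ x₂ h₂ hs => hw.2 (hKQ h₁) (hKQ h₂) hs⟩
      · exfalso
        have hs : w ∈ openSegment ℝ y k :=
          ⟨a, 1 - a, ha0', by linarith, by ring, hwe.symm⟩
        exact hwy ((hw.2 hyQ (hKQ hkK) hs).symm)
  · -- ext K ∪ {y} ⊆ ext Q
    intro w hw
    rcases hw with hw | hw
    · apply part1 w hw
      intro hwy'
      exact hH ⟨ξ, by linarith, w, hw, by rw [hwy', smul_inv_smul₀ (ne_of_gt hξ0)]⟩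
    · rw [Set.mem_singleton_iff] at hw
      rw [hw]; clear hw
      refine ⟨hyQ, ?_⟩
      intro x₁ hx₁ x₂ hx₂ hseg
      obtain ⟨a₁, k₁, hk₁, ha₁0, ha₁1, hx₁e⟩ := hQrep x₁ hx₁
      obtain ⟨a₂, k₂, hk₂, ha₂0, ha₂1, hx₂e⟩ := hQrep x₂ hx₂
      obtain ⟨u, v, hu, hv, huv, hzc⟩ := hseg
      have hw : u • x₁ + v • x₂
          = (u * a₁ + v * a₂) • y + ((u * (1 - a₁)) • k₁ + (v * (1 - a₂)) • k₂) := by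
        rw [hx₁e, hx₂e]
        module
      set t := u * a₁ + v * a₂ with htdef
      have ht1 : t ≤ 1 := by nlinarith
      rcases eq_or_lt_of_le ht1 with ht1' | ht1'
      · have h1 : 0 ≤ u * (1 - a₁) := by nlinarith
        have h2 : 0 ≤ v * (1 - a₂) := by nlinarith
        have h3 : u * (1 - a₁) + v * (1 - a₂) = 0 := by
          rw [htdef] at ht1'; nlinarith
        have ha₁ : a₁ = 1 := by
          have h4 : u * (1 - a₁) = 0 := by linarith
          rcases mul_eq_zero.mp h4 with h' | h'
          · exact absurd h' (ne_of_gt hu)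
          · linarith
        have ha₂ : a₂ = 1 := by
          have h4 : v * (1 - a₂) = 0 := by linarith
          rcases mul_eq_zero.mp h4 with h' | h'
          · exact absurd h' (ne_of_gt hv)
          · linarith
        rw [hx₁e, ha₁]; simp
      · exfalso
        have h1t : (0:ℝ) < 1 - t := by linarith
        have hyw : y = t • y + ((u * (1 - a₁)) • k₁ + (v * (1 - a₂)) • k₂) :=
          hzc.symm.trans hw
        have hkK : (1 - t)⁻¹ • ((u * (1 - a₁)) • k₁ + (v * (1 - a₂)) • k₂) ∈ K := by
          have hc1 : 0 ≤ (1 - t)⁻¹ * (u * (1 - a₁)) :=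
            mul_nonneg (inv_nonneg.mpr h1t.le) (mul_nonneg hu.le (by linarith))
          have hc2 : 0 ≤ (1 - t)⁻¹ * (v * (1 - a₂)) :=
            mul_nonneg (inv_nonneg.mpr h1t.le) (mul_nonneg hv.le (by linarith))
          have hcs : (1 - t)⁻¹ * (u * (1 - a₁)) + (1 - t)⁻¹ * (v * (1 - a₂)) = 1 := by
            rw [← mul_add,
              show u * (1 - a₁) + v * (1 - a₂) = 1 - t by rw [htdef]; linear_combination huv,
              inv_mul_cancel₀ (ne_of_gt h1t)]
          have := hKconv hk₁ hk₂ hc1 hc2 hcs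
          convert this using 1
          rw [smul_add, smul_smul, smul_smul]
        apply hyK
        have h2 : (1 - t) • y = (u * (1 - a₁)) • k₁ + (v * (1 - a₂)) • k₂ := by
          have h3 : (1 - t) • y
              = (t • y + ((u * (1 - a₁)) • k₁ + (v * (1 - a₂)) • k₂)) - t • y := by
            rw [← hyw, sub_smul, one_smul]
          rw [h3]
          abel
        have h4 : y = (1 - t)⁻¹ • ((u * (1 - a₁)) • k₁ + (v * (1 - a₂)) • k₂) := by
          rw [← h2, inv_smul_smul₀ (ne_of_gt h1t)]
        rwa [← h4] at hkK
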